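/- Let 0 < k < d, u_k < 0 ≤ u_0, u_d integers, and set λ = (−1)^d d^d/(k^k (d−k)^{d−k}). The sequence c_j = (−1)^{jd}(−u_k + jd)!/((u_0 + j(d−k))!(u_d + jk)!) satisfies c_j ~ μ·λ^j·j^{−α_1 − 1/2} as j → ∞ for some constant μ ≠ 0 and α_1 = u_0 + u_k + u_d; in particular c_j/λ^j is not asymptotic to any polynomial in j when α_1 + 1/2 ∉ −ℕ, so Σ_j c_j z^j is not a rational function of z with denominator a power of (1 − λz). -/

import Mathlib

open Filter

noncomputable section

/-- `λ = (−1)^d d^d / (k^k (d−k)^{d−k})`. -/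
def lamConst (k d : ℕ) : ℝ :=
  (-1) ^ d * (d : ℝ) ^ d / ((k : ℝ) ^ k * ((d : ℝ) - k) ^ (d - k))

/-- The coefficient sequence
`c_j = (−1)^{jd} (−u_k + jd)! / ((u_0 + j(d−k))! (u_d + jk)!)`. -/
def cseq (k d : ℕ) (u0 uk ud : ℤ) (j : ℕ) : ℝ :=
  (-1) ^ (j * d) * ((-uk + j * d).toNat.factorial : ℝ) /
    (((u0 + j * (d - k)).toNat.factorial : ℝ) *
      ((ud + j * k).toNat.factorial : ℝ))

open Real

noncomputable def myst (n : ℕ) : ℝ :=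
  (Nat.factorial n : ℝ) / (Real.sqrt (2*π) * Real.sqrt n * ((n : ℝ) / Real.exp 1) ^ n)

theorem myst_tendsto : Tendsto myst atTop (nhds 1) := by
  have h := Stirling.tendsto_stirlingSeq_sqrt_pi.div_const (Real.sqrt π)
  rw [div_self (by positivity : Real.sqrt π ≠ 0)] at h
  refine h.congr' ?_
  filter_upwards [eventually_ge_atTop 1] with n hn
  have hn0 : (0:ℝ) < n := by exact_mod_cast hn
  unfold Stirling.stirlingSeq myst
  rw [Real.sqrt_mul (by norm_num : (0:ℝ) ≤ 2) (n:ℝ),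
    Real.sqrt_mul (by norm_num : (0:ℝ) ≤ 2) π]
  have hπ : Real.sqrt π ≠ 0 := by positivity
  have h2 : Real.sqrt 2 ≠ 0 := by positivity
  have hsn : Real.sqrt n ≠ 0 := by positivity
  have hp : ((n : ℝ) / Real.exp 1) ^ n ≠ 0 := by positivity
  field_simp

noncomputable def myq (a : ℕ) (n : ℕ) : ℝ :=
  (Nat.factorial (n + a) : ℝ) / ((Nat.factorial n : ℝ) * (n : ℝ) ^ a)

theorem myq_tendsto (a : ℕ) : Tendsto (myq a) atTop (nhds 1) := by
  induction a with
  | zero =>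
    refine tendsto_const_nhds.congr' ?_
    filter_upwards [eventually_ge_atTop 1] with n hn
    have : (Nat.factorial n : ℝ) ≠ 0 := by positivity
    simp [myq, this]
  | succ a ih =>
    have h2 : Tendsto (fun n : ℕ => ((n:ℝ) + a + 1) / n) atTop (nhds 1) := by
      have h0 : Tendsto (fun n : ℕ => ((a:ℝ)+1)/n) atTop (nhds 0) :=
        tendsto_const_nhds.div_atTop (tendsto_natCast_atTop_atTop (R := ℝ))
      have h3 := h0.const_add 1
      rw [add_zero] at h3
      refine h3.congr' ?_
      filter_upwards [eventually_ge_atTop 1] with n hn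
      have hn0 : (n:ℝ) ≠ 0 := by positivity
      field_simp
      ring
    have hm := ih.mul h2
    rw [mul_one] at hm
    refine hm.congr' ?_
    filter_upwards [eventually_ge_atTop 1] with n hn
    have hn0 : (n:ℝ) ≠ 0 := by positivity
    have hf : (Nat.factorial n : ℝ) ≠ 0 := by positivity
    unfold myq
    rw [show n + (a+1) = (n + a) + 1 by ring, Nat.factorial_succ]
    push_cast
    field_simp
    ring

theorem comp_mul_tendsto {m : ℕ} (hm : 0 < m) :
    Tendsto (fun j : ℕ => j * m) atTop atTop :=
  tendsto_atTop_mono (fun j => Nat.le_mul_of_pos_right j hm) tendsto_id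



set_option maxHeartbeats 1000000 in
/-- Stirling estimate in the proof of Theorem 1.9: with
`α_1 = u_0 + u_k + u_d`, one has `c_j ~ μ λ^j j^{−α_1 − 1/2}` as `j → ∞`
for some nonzero constant `μ`; in particular `c_j/λ^j` is not eventually of
the form `p(j)` for a polynomial `p`, so `∑_j c_j z^j` is not a rational
function of `z` whose denominator is a power of `(1 − λz)`. -/
theorem stirling_asymptotics_not_rational
    (k d : ℕ) (hk : 0 < k) (hkd : k < d)
    (u0 uk ud : ℤ) (huk : uk < 0) (hu0 : 0 ≤ u0) (hud : 0 ≤ ud) :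
    (∃ μ : ℝ, μ ≠ 0 ∧
      Tendsto (fun j : ℕ =>
          cseq k d u0 uk ud j /
            (μ * lamConst k d ^ j *
              (j : ℝ) ^ (-((u0 + uk + ud : ℤ) : ℝ) - 1 / 2)))
        atTop (nhds 1)) ∧
    ¬∃ (p : Polynomial ℝ) (N : ℕ), ∀ j ≥ N,
        cseq k d u0 uk ud j = p.eval (j : ℝ) * lamConst k d ^ j := by
  obtain ⟨e, he0, rfl⟩ : ∃ e, 0 < e ∧ d = e + k := ⟨d - k, by omega, by omega⟩
  set A := (-uk).toNat with hA'
  set B := u0.toNat with hB'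
  set C := ud.toNat with hC'
  have hA : (A:ℤ) = -uk := Int.toNat_of_nonneg (by omega)
  have hB : (B:ℤ) = u0 := Int.toNat_of_nonneg hu0
  have hC : (C:ℤ) = ud := Int.toNat_of_nonneg hud
  have he0' : (0:ℝ) < e := by exact_mod_cast he0
  have hk0' : (0:ℝ) < k := by exact_mod_cast hk
  have hek0' : (0:ℝ) < (e:ℝ) + k := by linarith
  -- rewrite cseq into factorial form
  have hcs : ∀ j : ℕ, cseq k (e+k) u0 uk ud j =
      (-1)^(j*(e+k)) * (Nat.factorial (j*(e+k) + A) : ℝ) /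
        ((Nat.factorial (j*e + B) : ℝ) * (Nat.factorial (j*k + C) : ℝ)) := by
    intro j
    have h1 : (-uk + (j:ℤ) * ((e:ℤ)+(k:ℤ))).toNat = j*(e+k) + A := by
      have h : ((j:ℤ)) * ((e:ℤ)+(k:ℤ)) = ((j*(e+k) : ℕ) : ℤ) := by push_cast; ring
      rw [h]; omega
    have h2 : (u0 + (j:ℤ) * (((e+k:ℕ):ℤ) - (k:ℤ))).toNat = j*e + B := by
      have h : ((j:ℤ)) * (((e+k:ℕ):ℤ) - (k:ℤ)) = ((j*e : ℕ) : ℤ) := by push_cast; ring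
      rw [h]; omega
    have h3 : (ud + (j:ℤ) * (k:ℤ)).toNat = j*k + C := by
      have h : ((j:ℤ)) * (k:ℤ) = ((j*k : ℕ) : ℤ) := by push_cast; ring
      rw [h]; omega
    unfold cseq
    push_cast at h1 h2 ⊢
    rw [h1, h2, h3]
  -- lamConst in convenient form
  have hlam : lamConst k (e+k) = (-1:ℝ)^(e+k) * ((e:ℝ)+k)^(e+k) / ((k:ℝ)^k * (e:ℝ)^e) := by
    unfold lamConst
    rw [Nat.add_sub_cancel]
    push_cast
    ring_nf
  have hlamne : lamConst k (e+k) ≠ 0 := by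
    rw [hlam]
    apply div_ne_zero
    · exact mul_ne_zero (pow_ne_zero _ (by norm_num)) (by positivity)
    · positivity
  -- the constant μ
  set μ : ℝ := Real.sqrt ((e:ℝ)+k) / (Real.sqrt (2*π) * Real.sqrt e * Real.sqrt k) *
      (((e:ℝ)+k)^A / ((e:ℝ)^B * (k:ℝ)^C)) with hμ'
  have hμpos : 0 < μ := by
    apply mul_pos
    · apply div_pos (Real.sqrt_pos.2 hek0')
      have := Real.pi_pos
      exact mul_pos (mul_pos (Real.sqrt_pos.2 (by linarith)) (Real.sqrt_pos.2 he0'))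
        (Real.sqrt_pos.2 hk0')
    · exact div_pos (by positivity) (by positivity)
  have hμ : μ ≠ 0 := hμpos.ne'
  -- the comparison function
  set G : ℕ → ℝ := fun j =>
    (myst (j*(e+k)) / (myst (j*e) * myst (j*k))) *
      (myq A (j*(e+k)) / (myq B (j*e) * myq C (j*k))) with hG'
  have hGt : Tendsto G atTop (nhds 1) := by
    have h1 : Tendsto (fun j : ℕ => myst (j*(e+k))) atTop (nhds 1) :=
      myst_tendsto.comp (comp_mul_tendsto (by omega))
    have h2 : Tendsto (fun j : ℕ => myst (j*e)) atTop (nhds 1) :=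
      myst_tendsto.comp (comp_mul_tendsto he0)
    have h3 : Tendsto (fun j : ℕ => myst (j*k)) atTop (nhds 1) :=
      myst_tendsto.comp (comp_mul_tendsto hk)
    have h4 : Tendsto (fun j : ℕ => myq A (j*(e+k))) atTop (nhds 1) :=
      (myq_tendsto A).comp (comp_mul_tendsto (by omega))
    have h5 : Tendsto (fun j : ℕ => myq B (j*e)) atTop (nhds 1) :=
      (myq_tendsto B).comp (comp_mul_tendsto he0)
    have h6 : Tendsto (fun j : ℕ => myq C (j*k)) atTop (nhds 1) :=
      (myq_tendsto C).comp (comp_mul_tendsto hk)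
    have := (h1.div (h2.mul h3) (by norm_num)).mul (h4.div (h5.mul h6) (by norm_num))
    norm_num at this
    exact this
  -- the key identity
  have key : ∀ j : ℕ, 1 ≤ j →
      cseq k (e+k) u0 uk ud j /
        (μ * lamConst k (e+k) ^ j * (j:ℝ) ^ (-((u0 + uk + ud : ℤ) : ℝ) - 1/2)) = G j := by
    intro j hj
    have hj0 : (0:ℝ) < j := by exact_mod_cast hj
    have hexp : (j:ℝ) ^ (-((u0 + uk + ud : ℤ) : ℝ) - 1/2) =
        (j:ℝ)^A / ((j:ℝ)^B * (j:ℝ)^C * Real.sqrt j) := by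
      have h0 : -((u0 + uk + ud : ℤ) : ℝ) - 1/2 = ((A:ℝ) - (B:ℝ) - (C:ℝ)) - (1/2 : ℝ) := by
        have hz : (u0 + uk + ud : ℤ) = (B:ℤ) - A + C := by omega
        rw [hz]; push_cast; ring
      rw [h0, Real.rpow_sub hj0, Real.rpow_sub hj0, Real.rpow_sub hj0,
        Real.rpow_natCast, Real.rpow_natCast, Real.rpow_natCast,
        ← Real.sqrt_eq_rpow]
      field_simp
    rw [hcs j, hexp, hlam, hG', hμ']
    simp only [myst, myq]
    push_cast
    simp only [show Real.sqrt (2*π) = Real.sqrt 2 * Real.sqrt π from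
      Real.sqrt_mul (by norm_num) π]
    rw [Real.sqrt_mul (le_of_lt hj0) ((e:ℝ)+k), Real.sqrt_mul (le_of_lt hj0) (e:ℝ),
      Real.sqrt_mul (le_of_lt hj0) (k:ℝ)]
    simp only [div_pow, mul_pow]
    set E := Real.exp 1 with hE
    set w := (e:ℝ) + (k:ℝ) with hw
    have hw0 : 0 < w := hek0'
    have hwne : w ≠ 0 := hw0.ne'
    have hE0 : (0:ℝ) < E := Real.exp_pos 1
    have hEp1 : E ^ (j*(e+k)) ≠ 0 := pow_ne_zero _ hE0.ne'
    have hEp2 : E ^ (j*e) ≠ 0 := pow_ne_zero _ hE0.ne'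
    have hEp3 : E ^ (j*k) ≠ 0 := pow_ne_zero _ hE0.ne'
    have hjp1 : (j:ℝ) ^ (j*(e+k)) ≠ 0 := pow_ne_zero _ hj0.ne'
    have hjp2 : (j:ℝ) ^ (j*e) ≠ 0 := pow_ne_zero _ hj0.ne'
    have hjp3 : (j:ℝ) ^ (j*k) ≠ 0 := pow_ne_zero _ hj0.ne'
    have hsπ : Real.sqrt (2*π) ≠ 0 := by positivity
    have hsj : Real.sqrt (j:ℝ) ≠ 0 := by positivity
    have hse : Real.sqrt (e:ℝ) ≠ 0 := Real.sqrt_ne_zero'.2 he0'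
    have hsk : Real.sqrt (k:ℝ) ≠ 0 := Real.sqrt_ne_zero'.2 hk0'
    have hsek : Real.sqrt ((e:ℝ)+k) ≠ 0 := Real.sqrt_ne_zero'.2 hek0'
    have hje : (0:ℝ) < (j:ℝ)*(e:ℝ) := by positivity
    have hjk : (0:ℝ) < (j:ℝ)*(k:ℝ) := by positivity
    have hjek : (0:ℝ) < (j:ℝ)*((e:ℝ)+k) := by positivity
    have hf1 : (Nat.factorial (j*(e+k)) : ℝ) ≠ 0 := by positivity
    have hf2 : (Nat.factorial (j*e) : ℝ) ≠ 0 := by positivity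
    have hf3 : (Nat.factorial (j*k) : ℝ) ≠ 0 := by positivity
    have hf4 : (Nat.factorial (j*(e+k) + A) : ℝ) ≠ 0 := by positivity
    have hf5 : (Nat.factorial (j*e + B) : ℝ) ≠ 0 := by positivity
    have hf6 : (Nat.factorial (j*k + C) : ℝ) ≠ 0 := by positivity
    have hex1 : Real.exp 1 ≠ 0 := Real.exp_ne_zero 1
    have hm1 : ((-1:ℝ)^(e+k))^j ≠ 0 := pow_ne_zero _ (pow_ne_zero _ (by norm_num))
    field_simp
    ring
  constructor
  · refine ⟨μ, hμ, ?_⟩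
    refine hGt.congr' ?_
    filter_upwards [eventually_ge_atTop 1] with j hj
    exact (key j hj).symm
  · rintro ⟨p, N, hp⟩
    by_cases hp0 : p = 0
    · -- c_j would be eventually 0, contradicting tendsto to 1
      have hT : Tendsto (fun j : ℕ =>
          cseq k (e+k) u0 uk ud j /
            (μ * lamConst k (e+k) ^ j *
              (j : ℝ) ^ (-((u0 + uk + ud : ℤ) : ℝ) - 1 / 2))) atTop (nhds 1) := by
        refine hGt.congr' ?_
        filter_upwards [eventually_ge_atTop 1] with j hj
        exact (key j hj).symm
      have hzero : Tendsto (fun j : ℕ =>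
          cseq k (e+k) u0 uk ud j /
            (μ * lamConst k (e+k) ^ j *
              (j : ℝ) ^ (-((u0 + uk + ud : ℤ) : ℝ) - 1 / 2))) atTop (nhds 0) := by
        refine tendsto_const_nhds.congr' ?_
        filter_upwards [eventually_ge_atTop N] with j hj
        rw [hp j hj, hp0]
        simp
      exact one_ne_zero (tendsto_nhds_unique hT hzero)
    · set m := p.natDegree with hm'
      set c := p.leadingCoeff with hc'
      have hc : c ≠ 0 := Polynomial.leadingCoeff_ne_zero.2 hp0
      have heqv : Tendsto (fun x : ℝ => p.eval x / (c * x ^ m)) atTop (nhds 1) := by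
        have hev : ∀ᶠ x : ℝ in atTop, c * x ^ m ≠ 0 := by
          filter_upwards [eventually_gt_atTop 0] with x hx
          exact mul_ne_zero hc (pow_ne_zero _ hx.ne')
        exact (Asymptotics.isEquivalent_iff_tendsto_one hev).1 p.isEquivalent_atTop_lead
      have heqv' : Tendsto (fun j : ℕ => p.eval (j:ℝ) / (c * (j:ℝ) ^ m)) atTop (nhds 1) :=
        heqv.comp tendsto_natCast_atTop_atTop
      have hpev : ∀ᶠ j : ℕ in atTop, p.eval (j:ℝ) ≠ 0 := by
        have := heqv'.eventually (eventually_gt_nhds (by norm_num : (1:ℝ)/2 < 1))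
        filter_upwards [this] with j hj h0
        rw [h0, zero_div] at hj
        norm_num at hj
      have hT : Tendsto (fun j : ℕ =>
          cseq k (e+k) u0 uk ud j /
            (μ * lamConst k (e+k) ^ j *
              (j : ℝ) ^ (-((u0 + uk + ud : ℤ) : ℝ) - 1 / 2))) atTop (nhds 1) := by
        refine hGt.congr' ?_
        filter_upwards [eventually_ge_atTop 1] with j hj
        exact (key j hj).symm
      have hquot : Tendsto (fun j : ℕ =>
          p.eval (j:ℝ) / (μ * (j : ℝ) ^ (-((u0 + uk + ud : ℤ) : ℝ) - 1 / 2)))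
          atTop (nhds 1) := by
        refine hT.congr' ?_
        filter_upwards [eventually_ge_atTop N, eventually_ge_atTop 1] with j hjN hj1
        have hj0 : (0:ℝ) < j := by exact_mod_cast hj1
        have hrp : (j:ℝ) ^ (-((u0 + uk + ud : ℤ) : ℝ) - 1 / 2) ≠ 0 :=
          (Real.rpow_pos_of_pos hj0 _).ne'
        rw [hp j hjN]
        have hlj : lamConst k (e+k) ^ j ≠ 0 := pow_ne_zero _ hlamne
        field_simp
      -- divide
      have hdiv := hquot.div heqv' (by norm_num)
      norm_num at hdiv
      set t : ℝ := (m:ℝ) - (-((u0 + uk + ud : ℤ) : ℝ) - 1 / 2) with ht'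
      have hratio : Tendsto (fun j : ℕ => (c/μ) * (j:ℝ) ^ t) atTop (nhds 1) := by
        refine hdiv.congr' ?_
        filter_upwards [hpev, eventually_ge_atTop 1] with j hpj hj1
        have hj0 : (0:ℝ) < j := by exact_mod_cast hj1
        have hrp : (0:ℝ) < (j:ℝ) ^ (-((u0 + uk + ud : ℤ) : ℝ) - 1 / 2) :=
          Real.rpow_pos_of_pos hj0 _
        have hrt : (j:ℝ) ^ t = (j:ℝ) ^ (m:ℝ) / (j:ℝ) ^ (-((u0 + uk + ud : ℤ) : ℝ) - 1 / 2) := by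
          rw [ht', Real.rpow_sub hj0]
        rw [hrt]
        have hjm : ((j:ℝ))^m ≠ 0 := pow_ne_zero _ hj0.ne'
        simp only [Pi.div_apply]
        push_cast at hrp ⊢
        field_simp
        rw [Real.rpow_natCast]
        ring
      have hjt : Tendsto (fun j : ℕ => (j:ℝ) ^ t) atTop (nhds (μ/c)) := by
        have := hratio.const_mul (μ/c)
        rw [mul_one] at this
        refine this.congr ?_
        intro j
        field_simp
      have htne : t ≠ 0 := by
        intro h0
        have h1 : (m:ℝ) + ((u0 + uk + ud : ℤ) : ℝ) + 1/2 = 0 := by rw [ht'] at h0; linarith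
        have h2 : (2 * ((m:ℤ) + (u0 + uk + ud)) + 1 : ℤ) = 0 := by
          have : (2 * ((m:ℝ) + ((u0 + uk + ud : ℤ) : ℝ)) + 1 : ℝ) = 0 := by linarith
          exact_mod_cast this
        omega
      rcases lt_or_gt_of_ne htne with hneg | hpos
      · have h0 : Tendsto (fun j : ℕ => (j:ℝ) ^ t) atTop (nhds 0) := by
          have h := (tendsto_rpow_neg_atTop (by linarith : (0:ℝ) < -t)).comp
            (tendsto_natCast_atTop_atTop (R := ℝ))
          simp only [Function.comp_def, neg_neg] at h
          exact h
        have := tendsto_nhds_unique hjt h0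
        rw [div_eq_zero_iff] at this
        exact hμ (this.resolve_right hc)
      · have h0 : Tendsto (fun j : ℕ => (j:ℝ) ^ t) atTop atTop :=
          (tendsto_rpow_atTop hpos).comp tendsto_natCast_atTop_atTop
        exact not_tendsto_nhds_of_tendsto_atTop h0 _ hjt
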